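/- Let n ≥ m ≥ 1 and α > 0 be real. If m^{C(n-1,m)·α}·(m+1)^{C(n-1,m-1)·α}/(2n + 2·C(n,m)·α) ≤ m^{C(n,m)·α}/(2n), then (1 + 1/m)^{C(n-1,m-1)·α} ≤ 1 + (1/m)·C(n-1,m-1)·α; consequently α ≤ 1/C(n-1, m-1). -/

import Mathlib

/-- The key numerical step in the failure of the integral comparison principle: the
integral inequality coming from the radial test functions forces
`(1 + 1/m)^{C(n-1,m-1)·α} ≤ 1 + (1/m)·C(n-1,m-1)·α`, and consequently
`α ≤ 1/C(n-1,m-1)`. -/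
theorem comparison_principle_numerics (n m : ℕ) (α : ℝ)
    (hm : 1 ≤ m) (hmn : m ≤ n) (hα : 0 < α)
    (h : (m : ℝ) ^ ((((n - 1).choose m : ℕ) : ℝ) * α) *
          ((m : ℝ) + 1) ^ ((((n - 1).choose (m - 1) : ℕ) : ℝ) * α) /
          (2 * (n : ℝ) + 2 * ((n.choose m : ℕ) : ℝ) * α) ≤
        (m : ℝ) ^ (((n.choose m : ℕ) : ℝ) * α) / (2 * (n : ℝ))) :
    (1 + 1 / (m : ℝ)) ^ ((((n - 1).choose (m - 1) : ℕ) : ℝ) * α) ≤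
        1 + (1 / (m : ℝ)) * (((n - 1).choose (m - 1) : ℕ) : ℝ) * α ∧
      α ≤ 1 / (((n - 1).choose (m - 1) : ℕ) : ℝ) := by
  set A : ℕ := (n - 1).choose m with hA
  set B : ℕ := (n - 1).choose (m - 1) with hB
  have hn : 1 ≤ n := le_trans hm hmn
  have e1 : (n - 1).succ = n := by omega
  have e2 : (m - 1).succ = m := by omega
  have hpascal : n.choose m = A + B := by
    have := Nat.choose_succ_succ (n - 1) (m - 1)
    rw [e1, e2] at this
    rw [hA, hB, this, Nat.add_comm]
  have hident : m * n.choose m = n * B := by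
    have := Nat.add_one_mul_choose_eq (n - 1) (m - 1)
    rw [Nat.sub_add_cancel hn, Nat.sub_add_cancel hm] at this
    rw [hB]
    exact (this.trans (Nat.mul_comm _ _)).symm
  have hBpos : 0 < B := Nat.choose_pos (by omega)
  have hmR : (0:ℝ) < m := by exact_mod_cast hm
  have hnR : (0:ℝ) < n := by exact_mod_cast hn
  have hCpos : (0:ℝ) < (n.choose m : ℝ) := by
    exact_mod_cast Nat.choose_pos hmn
  have hden : (0:ℝ) < 2 * (n:ℝ) + 2 * (n.choose m : ℝ) * α := by positivity
  have hden2 : (0:ℝ) < 2 * (n:ℝ) := by positivity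
  -- cross multiply
  have h1 : (m : ℝ) ^ ((A : ℝ) * α) * ((m : ℝ) + 1) ^ ((B : ℝ) * α) * (2 * n) ≤
      (m : ℝ) ^ (((n.choose m : ℕ) : ℝ) * α) * (2 * (n:ℝ) + 2 * (n.choose m : ℝ) * α) := by
    rw [div_le_div_iff₀ hden hden2] at h
    linarith
  have hsplit : (m : ℝ) ^ (((n.choose m : ℕ) : ℝ) * α) =
      (m : ℝ) ^ ((A : ℝ) * α) * (m : ℝ) ^ ((B : ℝ) * α) := by
    rw [← Real.rpow_add hmR, hpascal]
    push_cast
    ring_nf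
  have hApos : (0:ℝ) < (m:ℝ) ^ ((A : ℝ) * α) := Real.rpow_pos_of_pos hmR _
  have h2 : ((m : ℝ) + 1) ^ ((B : ℝ) * α) * (2 * n) ≤
      (m : ℝ) ^ ((B : ℝ) * α) * (2 * (n:ℝ) + 2 * (n.choose m : ℝ) * α) := by
    rw [hsplit] at h1
    have := mul_le_mul_of_nonneg_left h1 (le_of_lt (inv_pos.mpr hApos))
    calc ((m : ℝ) + 1) ^ ((B : ℝ) * α) * (2 * n)
        = ((m:ℝ) ^ ((A : ℝ) * α))⁻¹ * ((m : ℝ) ^ ((A : ℝ) * α) * ((m : ℝ) + 1) ^ ((B : ℝ) * α) * (2 * n)) := by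
          field_simp
      _ ≤ ((m:ℝ) ^ ((A : ℝ) * α))⁻¹ * ((m : ℝ) ^ ((A : ℝ) * α) * (m : ℝ) ^ ((B : ℝ) * α) * (2 * (n:ℝ) + 2 * (n.choose m : ℝ) * α)) := this
      _ = (m : ℝ) ^ ((B : ℝ) * α) * (2 * (n:ℝ) + 2 * (n.choose m : ℝ) * α) := by
          field_simp
  have hmB : (0:ℝ) < (m:ℝ) ^ ((B : ℝ) * α) := Real.rpow_pos_of_pos hmR _
  have hdivpow : (1 + 1 / (m : ℝ)) ^ ((B : ℝ) * α) =
      ((m : ℝ) + 1) ^ ((B : ℝ) * α) / (m : ℝ) ^ ((B : ℝ) * α) := by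
    rw [← Real.div_rpow (by positivity) (le_of_lt hmR)]
    congr 1
    field_simp
  have key : (1 + 1 / (m : ℝ)) ^ ((B : ℝ) * α) ≤ 1 + (1 / (m : ℝ)) * (B : ℝ) * α := by
    rw [hdivpow, div_le_iff₀ hmB]
    have hratio : 1 + (1 / (m : ℝ)) * (B : ℝ) * α = (2 * (n:ℝ) + 2 * (n.choose m : ℝ) * α) / (2 * n) := by
      have : (m:ℝ) * (n.choose m : ℝ) = (n:ℝ) * (B:ℝ) := by exact_mod_cast hident
      field_simp
      nlinarith [this]
    rw [hratio, div_mul_eq_mul_div, le_div_iff₀ hden2]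
    nlinarith [h2]
  refine ⟨key, ?_⟩
  by_contra hcon
  push_neg at hcon
  have hB1 : 1 < (B : ℝ) * α := by
    have hBR : (0:ℝ) < (B:ℝ) := by exact_mod_cast hBpos
    rw [div_lt_iff₀ hBR] at hcon
    linarith [hcon]
  have := one_add_mul_self_lt_rpow_one_add (s := 1 / (m:ℝ)) (le_trans (by norm_num) (by positivity : (0:ℝ) ≤ 1/(m:ℝ))) (by positivity : (0:ℝ) < 1/(m:ℝ)).ne' hB1
  rw [div_lt_iff₀ (by exact_mod_cast hBpos : (0:ℝ) < (B:ℝ))] at hcon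
  nlinarith [this, key]
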